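/- Suppose the Hermitian form ⟨·,·⟩ is orthomodular and let M be a closed subspace of E. Then: (a) every closed subspace L of E with L ⊆ M remains closed relative to M, i.e. (L^⊥ ∩ M)^⊥ ∩ M = L; and (b) the form restricted to M is orthomodular, i.e. for every subspace L ⊆ M satisfying (L^⊥ ∩ M)^⊥ ∩ M = L, one has L + (L^⊥ ∩ M) = M. -/
import Mathlib


/-- A (nondegenerate) Hermitian space: a division ring `K` with an involution,
a left `K`-vector space `E`, and a Hermitian form on `E`. -/
structure HermitianSpace (K E : Type*) [DivisionRing K] [AddCommGroup E] [Module K E] where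
  star : K → K
  star_add : ∀ a b : K, star (a + b) = star a + star b
  star_mul : ∀ a b : K, star (a * b) = star b * star a
  star_star : ∀ a : K, star (star a) = a
  form : E → E → K
  form_add_left : ∀ x y z : E, form (x + y) z = form x z + form y z
  form_add_right : ∀ x y z : E, form x (y + z) = form x y + form x z
  form_smul_left : ∀ (ρ : K) (x y : E), form (ρ • x) y = ρ * form x y
  form_smul_right : ∀ (ρ : K) (x y : E), form x (ρ • y) = form x y * star ρ
  nondeg : ∀ a : E, (∀ x : E, form a x = 0) → a = 0
  hermitian : ∀ x y : E, star (form x y) = form y x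

namespace HermitianSpace

variable {K E : Type*} [DivisionRing K] [AddCommGroup E] [Module K E]

/-- The orthogonal companion `M^⊥` of a subspace `M`. -/
def perp (h : HermitianSpace K E) (M : Submodule K E) : Submodule K E where
  carrier := {x : E | ∀ m ∈ M, h.form x m = 0}
  add_mem' := fun {a b} ha hb => by
    intro m hm
    rw [h.form_add_left, ha m hm, hb m hm, add_zero]
  zero_mem' := by
    intro m hm
    have h0 : h.form ((0 : K) • (0 : E)) m = 0 * h.form 0 m := h.form_smul_left 0 0 m
    simpa using h0
  smul_mem' := fun c a ha => by
    intro m hm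
    rw [h.form_smul_left, ha m hm, mul_zero]

/-- The form is orthomodular when `M + M^⊥ = E` for every closed subspace `M`. -/
def Orthomodular (h : HermitianSpace K E) : Prop :=
  ∀ M : Submodule K E, h.perp (h.perp M) = M → M ⊔ h.perp M = ⊤

/-- The form is anisotropic when `⟨x, x⟩ ≠ 0` for every nonzero `x`. -/
def Anisotropic (h : HermitianSpace K E) : Prop :=
  ∀ x : E, x ≠ 0 → h.form x x ≠ 0

end HermitianSpace


section Aux
variable {K E : Type*} [DivisionRing K] [AddCommGroup E] [Module K E]

lemma HS.star_zero (h : HermitianSpace K E) : h.star 0 = 0 := by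
  have h1 : h.star 0 = h.star 0 + h.star 0 := by
    simpa using h.star_add 0 0
  have h2 : h.star 0 + h.star 0 = h.star 0 + 0 := by rw [← h1, add_zero]
  exact (add_left_cancel h2)

lemma HS.form_symm_zero (h : HermitianSpace K E) {x y : E}
    (hxy : h.form x y = 0) : h.form y x = 0 := by
  rw [← h.hermitian, hxy, HS.star_zero]

lemma HS.mem_perp (h : HermitianSpace K E) {S : Submodule K E} {x : E} :
    x ∈ h.perp S ↔ ∀ m ∈ S, h.form x m = 0 := Iff.rfl

lemma HS.perp_antitone (h : HermitianSpace K E) {A B : Submodule K E}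
    (hAB : A ≤ B) : h.perp B ≤ h.perp A := by
  intro x hx m hm
  exact hx m (hAB hm)

lemma HS.le_perp_perp (h : HermitianSpace K E) (A : Submodule K E) :
    A ≤ h.perp (h.perp A) := by
  intro x hx m hm
  exact HS.form_symm_zero h (hm x hx)

end Aux

/-- In an orthomodular Hermitian space, (a) a closed subspace `L` contained in a
closed subspace `M` remains closed relative to `M`, and (b) the form restricted
to a closed subspace `M` is again orthomodular. -/
theorem orthomodular_restrict {K E : Type*} [DivisionRing K] [AddCommGroup E] [Module K E]
    (h : HermitianSpace K E) (hom : h.Orthomodular)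
    (M : Submodule K E) (hM : h.perp (h.perp M) = M) :
    (∀ L : Submodule K E, L ≤ M → h.perp (h.perp L) = L →
        h.perp (h.perp L ⊓ M) ⊓ M = L) ∧
    (∀ L : Submodule K E, L ≤ M → h.perp (h.perp L ⊓ M) ⊓ M = L →
        L ⊔ (h.perp L ⊓ M) = M) := by
  constructor
  · intro L hLM hL
    apply le_antisymm
    · rintro x ⟨hx1, hxM⟩
      rw [← hL]
      intro m hm
      have htop : M ⊔ h.perp M = ⊤ := hom M hM
      have hmem : m ∈ M ⊔ h.perp M := htop ▸ Submodule.mem_top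
      obtain ⟨m₁, hm₁, m₂, hm₂, rfl⟩ := Submodule.mem_sup.mp hmem
      have hm₁L : m₁ ∈ h.perp L := by
        intro l hl
        have h2 : h.form m₂ l = 0 := hm₂ l (hLM hl)
        have h3 := hm l hl
        rw [h.form_add_left, h2, add_zero] at h3
        exact h3
      have e1 : h.form x m₁ = 0 := hx1 m₁ (Submodule.mem_inf.mpr ⟨hm₁L, hm₁⟩)
      have e2 : h.form x m₂ = 0 := HS.form_symm_zero h (hm₂ x hxM)
      rw [h.form_add_right, e1, e2, add_zero]
    · refine le_inf (le_trans (HS.le_perp_perp h L) ?_) hLM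
      exact HS.perp_antitone h inf_le_left
  · intro L hLM hL
    have hMle : h.perp (h.perp L) ≤ M := by
      calc h.perp (h.perp L) ≤ h.perp (h.perp M) :=
            HS.perp_antitone h (HS.perp_antitone h hLM)
        _ = M := hM
    have hLc : h.perp (h.perp L) = L := by
      apply le_antisymm
      · calc h.perp (h.perp L) ≤ h.perp (h.perp L ⊓ M) ⊓ M :=
              le_inf (HS.perp_antitone h inf_le_left) hMle
          _ = L := hL
      · exact HS.le_perp_perp h L
    have htop := hom L hLc
    calc L ⊔ (h.perp L ⊓ M) = (L ⊔ h.perp L) ⊓ M := (sup_inf_assoc_of_le _ hLM).symm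
      _ = ⊤ ⊓ M := by rw [htop]
      _ = M := top_inf_eq M
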